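/- The combinator T = λx.λy. y x satisfies T_(3) = T_(2), i.e., T T T is βη-equivalent to T T, and T_(2) is not βη-equivalent to T. -/

import Mathlib

/-- Untyped lambda terms in de Bruijn representation. -/
inductive Lam where
  | var : Nat → Lam
  | app : Lam → Lam → Lam
  | lam : Lam → Lam
deriving DecidableEq

namespace Lam

/-- Lift (shift by one) all free variables with index ≥ `c`. -/
def lift (c : Nat) : Lam → Lam
  | var n => if n < c then var n else var (n + 1)
  | app a b => app (lift c a) (lift c b)
  | lam a => lam (lift (c + 1) a)

/-- Substitute `s` for the free variable with index `d`. -/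
def subst (d : Nat) (s : Lam) : Lam → Lam
  | var n => if n = d then s else if d < n then var (n - 1) else var n
  | app a b => app (subst d s a) (subst d s b)
  | lam a => lam (subst (d + 1) (lift 0 s) a)

/-- One-step βη-reduction (compatible closure of β and η). -/
inductive Step : Lam → Lam → Prop
  | beta (a b : Lam) : Step (app (lam a) b) (subst 0 b a)
  | eta (a : Lam) : Step (lam (app (lift 0 a) (var 0))) a
  | appL {a a' : Lam} (b : Lam) : Step a a' → Step (app a b) (app a' b)
  | appR (a : Lam) {b b' : Lam} : Step b b' → Step (app a b) (app a b')
  | xi {a a' : Lam} : Step a a' → Step (lam a) (lam a')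

/-- βη-equivalence: the equivalence relation generated by one-step βη-reduction. -/
def BetaEtaEq (a b : Lam) : Prop := Relation.EqvGen Step a b

/-- The B combinator λf.λg.λx. f (g x). -/
def B : Lam := lam (lam (lam (app (var 2) (app (var 1) (var 0)))))

/-- `flat X n` is the (n+1)-fold flat left application, i.e. `X_(n+1)`:
`flat X 0 = X = X_(1)` and `flat X (n+1) = (flat X n) X = X_(n+2)`. -/
def flat (X : Lam) : Nat → Lam
  | 0 => X
  | n + 1 => app (flat X n) X

end Lam
namespace Lam

theorem lift_lift (t : Lam) : ∀ c c', c ≤ c' →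
    lift c (lift c' t) = lift (c' + 1) (lift c t) := by
  induction t with
  | var n =>
    intro c c' h
    simp only [lift]
    split_ifs <;> simp only [lift] <;> split_ifs <;>
      first | rfl | (congr 1; omega) | (exfalso; omega)
  | app a b iha ihb => intro c c' h; simp only [lift, iha _ _ h, ihb _ _ h]
  | lam a iha =>
    intro c c' h
    simp only [lift]
    rw [iha (c+1) (c'+1) (by omega)]

theorem lift_subst_low (t : Lam) : ∀ s d c, c ≤ d →
    lift c (subst d s t) = subst (d + 1) (lift c s) (lift c t) := by
  induction t with
  | var n =>
    intro s d c h
    simp only [subst, lift]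
    split_ifs <;> simp only [subst, lift] <;> split_ifs <;>
      first | rfl | (congr 1; omega) | (exfalso; omega)
  | app a b iha ihb => intro s d c h; simp only [subst, lift, iha _ _ _ h, ihb _ _ _ h]
  | lam a iha =>
    intro s d c h
    simp only [subst, lift]
    rw [iha (lift 0 s) (d+1) (c+1) (by omega), lift_lift s 0 c (by omega)]

theorem lift_subst_high (t : Lam) : ∀ s d c, d ≤ c →
    lift c (subst d s t) = subst d (lift c s) (lift (c + 1) t) := by
  induction t with
  | var n =>
    intro s d c h
    simp only [subst, lift]
    split_ifs <;> simp only [subst, lift] <;> split_ifs <;>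
      first | rfl | (congr 1; omega) | (exfalso; omega)
  | app a b iha ihb => intro s d c h; simp only [subst, lift, iha _ _ _ h, ihb _ _ _ h]
  | lam a iha =>
    intro s d c h
    simp only [subst, lift]
    rw [iha (lift 0 s) (d+1) (c+1) (by omega), lift_lift s 0 c (by omega)]

theorem subst_lift (t : Lam) : ∀ s c, subst c s (lift c t) = t := by
  induction t with
  | var n =>
    intro s c
    simp only [lift]
    split_ifs <;> simp only [subst] <;> split_ifs <;>
      first | rfl | (congr 1; omega) | (exfalso; omega)
  | app a b iha ihb => intro s c; simp only [lift, subst, iha, ihb]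
  | lam a iha => intro s c; simp only [lift, subst, iha]

theorem subst_var_lift (t : Lam) : ∀ c, subst c (var c) (lift (c + 1) t) = t := by
  induction t with
  | var n =>
    intro c
    simp only [lift]
    split_ifs <;> simp only [subst] <;> split_ifs <;>
      first | rfl | (congr 1; omega) | (exfalso; omega)
  | app a b iha ihb => intro c; simp only [lift, subst, iha, ihb]
  | lam a iha =>
    intro c
    simp only [lift, subst]
    rw [show (if c < 0 then var c else var (c+1)) = var (c+1) from if_neg (by omega)]
    rw [iha (c+1)]

theorem subst_subst (t : Lam) : ∀ s u d e, e ≤ d →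
    subst d u (subst e s t) = subst e (subst d u s) (subst (d + 1) (lift e u) t) := by
  induction t with
  | var n =>
    intro s u d e h
    simp only [subst]
    split_ifs <;> (try simp only [subst]) <;> (try split_ifs) <;>
      first
      | rfl | (exfalso; omega) | (congr 1; omega)
      | (rw [subst_lift]) | (subst_vars; rw [subst_lift])
  | app a b iha ihb => intro s u d e h; simp only [subst, iha _ _ _ _ h, ihb _ _ _ _ h]
  | lam a iha =>
    intro s u d e h
    simp only [subst]
    rw [iha (lift 0 s) (lift 0 u) (d+1) (e+1) (by omega),
      lift_subst_low s u d 0 (by omega), lift_lift u 0 e (by omega)]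

end Lam
namespace Lam

theorem lift_eq_app {c : Nat} {t p q : Lam} (h : lift c t = app p q) :
    ∃ t₁ t₂, t = app t₁ t₂ ∧ p = lift c t₁ ∧ q = lift c t₂ := by
  cases t with
  | var n => simp only [lift] at h; split_ifs at h <;> exact Lam.noConfusion h
  | app t₁ t₂ => exact ⟨t₁, t₂, rfl, (Lam.app.inj h).1.symm, (Lam.app.inj h).2.symm⟩
  | lam t₁ => simp only [lift] at h; exact Lam.noConfusion h

theorem lift_eq_lam {c : Nat} {t p : Lam} (h : lift c t = lam p) :
    ∃ t₁, t = lam t₁ ∧ p = lift (c + 1) t₁ := by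
  cases t with
  | var n => simp only [lift] at h; split_ifs at h <;> exact Lam.noConfusion h
  | app t₁ t₂ => simp only [lift] at h; exact Lam.noConfusion h
  | lam t₁ => exact ⟨t₁, rfl, (Lam.lam.inj h).symm⟩

theorem lift_eq_var_zero {c : Nat} {t : Lam} (h : lift c t = var 0) : t = var 0 := by
  cases t with
  | var n =>
    simp only [lift] at h
    split_ifs at h
    · exact h
    · exact absurd (Lam.var.inj h) (by omega)
  | app t₁ t₂ => simp only [lift] at h; exact Lam.noConfusion h
  | lam t₁ => simp only [lift] at h; exact Lam.noConfusion h

theorem lift_swap_inv (u : Lam) : ∀ (p : Lam) (c c' : Nat), c' ≤ c →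
    lift (c + 1) u = lift c' p → ∃ q, u = lift c' q ∧ p = lift c q := by
  induction u with
  | var n =>
    intro p c c' hle h
    have ⟨m, hm⟩ : ∃ m, p = var m := by
      cases p with
      | var m => exact ⟨m, rfl⟩
      | app _ _ => simp only [lift] at h; split_ifs at h <;> exact Lam.noConfusion h
      | lam _ => simp only [lift] at h; split_ifs at h <;> exact Lam.noConfusion h
    subst hm
    simp only [lift] at h
    rcases Nat.lt_or_ge n (c+1) with h1 | h1 <;> rcases Nat.lt_or_ge m c' with h2 | h2
    · rw [if_pos h1, if_pos h2] at h
      obtain rfl : n = m := Lam.var.inj h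
      exact ⟨var n, by simp [lift, if_pos (show n < c' by omega)],
        by simp [lift, if_pos (show n < c by omega)]⟩
    · rw [if_pos h1, if_neg (by omega)] at h
      have he : n = m + 1 := Lam.var.inj h
      refine ⟨var m, ?_, ?_⟩
      · simp only [lift]; rw [if_neg (show ¬ m < c' by omega)]; congr 1 <;> omega
      · simp only [lift]; rw [if_pos (show m < c by omega)]
    · rw [if_neg (by omega), if_pos h2] at h
      exact absurd (Lam.var.inj h) (by omega)
    · rw [if_neg (by omega), if_neg (by omega)] at h
      have he : n + 1 = m + 1 := Lam.var.inj h
      refine ⟨var (n-1), ?_, ?_⟩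
      · simp only [lift]; rw [if_neg (show ¬ n-1 < c' by omega)]; congr 1 <;> omega
      · simp only [lift]; rw [if_neg (show ¬ n-1 < c by omega)]; congr 1 <;> omega
  | app a b iha ihb =>
    intro p c c' hle h
    simp only [lift] at h
    obtain ⟨p₁, p₂, rfl, h1, h2⟩ := lift_eq_app h.symm
    obtain ⟨q₁, hq₁, hp₁⟩ := iha p₁ c c' hle h1
    obtain ⟨q₂, hq₂, hp₂⟩ := ihb p₂ c c' hle h2
    exact ⟨app q₁ q₂, by simp [lift, hq₁, hq₂], by simp [lift, hp₁, hp₂]⟩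
  | lam a iha =>
    intro p c c' hle h
    simp only [lift] at h
    obtain ⟨p₁, rfl, h1⟩ := lift_eq_lam h.symm
    obtain ⟨q₁, hq₁, hp₁⟩ := iha p₁ (c+1) (c'+1) (by omega) h1
    exact ⟨lam q₁, by simp [lift, hq₁], by simp [lift, hp₁]⟩

end Lam
namespace Lam

/-- Parallel βη-reduction. -/
inductive Par : Lam → Lam → Prop
  | var (n : Nat) : Par (var n) (var n)
  | app {a a' b b'} : Par a a' → Par b b' → Par (app a b) (app a' b')
  | lam {a a'} : Par a a' → Par (lam a) (lam a')
  | beta {a a' b b'} : Par a a' → Par b b' → Par (app (lam a) b) (subst 0 b' a')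
  | eta {a a'} : Par a a' → Par (lam (app (lift 0 a) (var 0))) a'

theorem par_refl (t : Lam) : Par t t := by
  induction t with
  | var n => exact Par.var n
  | app a b iha ihb => exact Par.app iha ihb
  | lam a iha => exact Par.lam iha

theorem step_par {a b : Lam} (h : Step a b) : Par a b := by
  induction h with
  | beta a b => exact Par.beta (par_refl a) (par_refl b)
  | eta a => exact Par.eta (par_refl a)
  | appL b _ ih => exact Par.app ih (par_refl b)
  | appR a _ ih => exact Par.app (par_refl a) ih
  | xi _ ih => exact Par.lam ih

theorem par_lift {a b : Lam} (h : Par a b) : ∀ c, Par (lift c a) (lift c b) := by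
  induction h with
  | var n => intro c; simp only [lift]; split_ifs <;> exact par_refl _
  | app _ _ iha ihb => intro c; exact Par.app (iha c) (ihb c)
  | lam _ iha => intro c; exact Par.lam (iha (c+1))
  | @beta p p' q q' _ _ ihp ihq =>
    intro c
    simp only [lift]
    rw [lift_subst_high p' q' 0 c (Nat.zero_le c)]
    exact Par.beta (ihp (c+1)) (ihq c)
  | @eta p p' _ ihp =>
    intro c
    simp only [lift]
    rw [if_pos (show 0 < c + 1 by omega)]
    rw [← lift_lift p 0 c (Nat.zero_le c)]
    exact Par.eta (ihp c)

theorem par_lift_inv : ∀ {x b : Lam}, Par x b → ∀ (a : Lam) (c : Nat), x = lift c a →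
    ∃ b', b = lift c b' ∧ Par a b' := by
  intro x b h
  induction h with
  | var n => intro a c hx; exact ⟨a, hx, par_refl a⟩
  | @app p p' q q' _ _ ihp ihq =>
    intro a c hx
    obtain ⟨a₁, a₂, rfl, h1, h2⟩ := lift_eq_app hx.symm
    obtain ⟨b₁, rfl, hb₁⟩ := ihp a₁ c h1
    obtain ⟨b₂, rfl, hb₂⟩ := ihq a₂ c h2
    exact ⟨app b₁ b₂, by simp [lift], Par.app hb₁ hb₂⟩
  | @lam p p' _ ihp =>
    intro a c hx
    obtain ⟨a₁, rfl, h1⟩ := lift_eq_lam hx.symm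
    obtain ⟨b₁, rfl, hb₁⟩ := ihp a₁ (c+1) h1
    exact ⟨lam b₁, by simp [lift], Par.lam hb₁⟩
  | @beta p p' q q' _ _ ihp ihq =>
    intro a c hx
    obtain ⟨a₁, a₂, rfl, h1, h2⟩ := lift_eq_app hx.symm
    obtain ⟨a₀, rfl, h0⟩ := lift_eq_lam h1.symm
    obtain ⟨b₁, rfl, hb₁⟩ := ihp a₀ (c+1) h0
    obtain ⟨b₂, rfl, hb₂⟩ := ihq a₂ c h2
    exact ⟨subst 0 b₂ b₁, (lift_subst_high b₁ b₂ 0 c (Nat.zero_le c)).symm,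
      Par.beta hb₁ hb₂⟩
  | @eta p p' _ ihp =>
    intro a c hx
    obtain ⟨a₁, rfl, h1⟩ := lift_eq_lam hx.symm
    obtain ⟨u, v, rfl, h2, h3⟩ := lift_eq_app h1.symm
    obtain rfl : v = var 0 := lift_eq_var_zero h3.symm
    obtain ⟨q, rfl, rfl⟩ := lift_swap_inv u p c 0 (Nat.zero_le c) h2.symm
    obtain ⟨b₁, rfl, hb₁⟩ := ihp q c rfl
    exact ⟨b₁, rfl, Par.eta hb₁⟩

theorem par_subst {a a' : Lam} (h : Par a a') :
    ∀ (b b' : Lam) (d : Nat), Par b b' → Par (subst d b a) (subst d b' a') := by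
  induction h with
  | var n =>
    intro b b' d hb
    simp only [subst]
    split_ifs <;> first | exact hb | exact par_refl _
  | app _ _ iha ihb => intro b b' d hb; exact Par.app (iha _ _ _ hb) (ihb _ _ _ hb)
  | lam _ iha =>
    intro b b' d hb
    exact Par.lam (iha _ _ (d+1) (par_lift hb 0))
  | @beta p p' q q' _ _ ihp ihq =>
    intro b b' d hb
    simp only [subst]
    rw [subst_subst p' q' b' d 0 (Nat.zero_le d)]
    exact Par.beta (ihp _ _ (d+1) (par_lift hb 0)) (ihq _ _ d hb)
  | @eta p p' _ ihp =>
    intro b b' d hb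
    simp only [subst]
    rw [if_neg (show ¬ (0:Nat) = d + 1 by omega), if_neg (show ¬ d + 1 < 0 by omega)]
    rw [← lift_subst_low p b d 0 (Nat.zero_le d)]
    exact Par.eta (ihp _ _ d hb)

end Lam
namespace Lam

def size : Lam → Nat
  | var _ => 1
  | app a b => size a + size b + 1
  | lam a => size a + 1

theorem size_lift (t : Lam) : ∀ c, size (lift c t) = size t := by
  induction t with
  | var n => intro c; simp only [lift]; split_ifs <;> rfl
  | app a b iha ihb => intro c; simp only [lift, size, iha, ihb]
  | lam a iha => intro c; simp only [lift, size, iha]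

def unlift (c : Nat) : Lam → Option Lam
  | var n => if n = c then none else if n < c then some (var n) else some (var (n - 1))
  | app a b =>
    match unlift c a, unlift c b with
    | some a', some b' => some (app a' b')
    | _, _ => none
  | lam a =>
    match unlift (c + 1) a with
    | some a' => some (lam a')
    | none => none

theorem unlift_lift (t : Lam) : ∀ c, unlift c (lift c t) = some t := by
  induction t with
  | var n =>
    intro c
    simp only [lift]
    split_ifs with h
    · simp only [unlift]
      rw [if_neg (by omega), if_pos h]
    · simp only [unlift]
      rw [if_neg (by omega), if_neg (by omega)]
      simp only [Nat.add_sub_cancel]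
  | app a b iha ihb => intro c; simp only [lift, unlift, iha, ihb]
  | lam a iha => intro c; simp only [lift, unlift, iha]

theorem lift_unlift : ∀ {t t' : Lam} {c : Nat}, unlift c t = some t' → lift c t' = t := by
  intro t
  induction t with
  | var n =>
    intro t' c h
    simp only [unlift] at h
    split_ifs at h with h1 h2
    · obtain rfl := Option.some.inj h
      simp only [lift]; rw [if_pos h2]
    · obtain rfl := Option.some.inj h
      simp only [lift]; rw [if_neg (by omega)]; congr 1; omega
  | app a b iha ihb =>
    intro t' c h
    rcases ha : unlift c a with _ | a' <;> rcases hb : unlift c b with _ | b' <;>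
      simp only [unlift, ha, hb] at h <;> try contradiction
    obtain rfl := Option.some.inj h
    simp only [lift, iha ha, ihb hb]
  | lam a iha =>
    intro t' c h
    rcases ha : unlift (c+1) a with _ | a' <;> simp only [unlift, ha] at h <;>
      try contradiction
    obtain rfl := Option.some.inj h
    simp only [lift, iha ha]

theorem size_unlift {t t' : Lam} {c : Nat} (h : unlift c t = some t') : size t' = size t := by
  rw [← lift_unlift h, size_lift]

def cd : Lam → Lam
  | var n => var n
  | app (var n) b => app (var n) (cd b)
  | app (app a₁ a₂) b => app (cd (app a₁ a₂)) (cd b)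
  | app (lam a) b => subst 0 (cd b) (cd a)
  | lam (var n) => lam (var n)
  | lam (lam a) => lam (cd (lam a))
  | lam (app u (var 0)) =>
    match h : unlift 0 u with
    | some u₀ => cd u₀
    | none => lam (cd (app u (var 0)))
  | lam (app u (var (n+1))) => lam (cd (app u (var (n+1))))
  | lam (app u (app x y)) => lam (cd (app u (app x y)))
  | lam (app u (lam x)) => lam (cd (app u (lam x)))
termination_by t => size t
decreasing_by
  all_goals first
  | (simp only [size, size_unlift h]; omega)
  | (simp only [size]; omega)

end Lam
namespace Lam

theorem cd_var (n : Nat) : cd (var n) = var n := by simp [cd]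
theorem cd_app_var (n : Nat) (b : Lam) : cd (app (var n) b) = app (var n) (cd b) := by
  simp [cd]
theorem cd_app_app (a₁ a₂ b : Lam) :
    cd (app (app a₁ a₂) b) = app (cd (app a₁ a₂)) (cd b) := by simp [cd]
theorem cd_beta (a b : Lam) : cd (app (lam a) b) = subst 0 (cd b) (cd a) := by simp [cd]
theorem cd_lam_var (n : Nat) : cd (lam (var n)) = lam (var n) := by simp [cd]
theorem cd_lam_lam (a : Lam) : cd (lam (lam a)) = lam (cd (lam a)) := by simp [cd]
theorem cd_lam_some {u u₀ : Lam} (h : unlift 0 u = some u₀) :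
    cd (lam (app u (var 0))) = cd u₀ := by
  rw [cd]
  split
  · rename_i h' ; rw [h] at h' ; exact congrArg cd (Option.some.inj h').symm
  · rename_i h' ; rw [h] at h' ; exact nomatch h'
theorem cd_lam_none {u : Lam} (h : unlift 0 u = none) :
    cd (lam (app u (var 0))) = lam (cd (app u (var 0))) := by
  rw [cd]
  split
  · rename_i h' ; rw [h] at h' ; exact nomatch h'
  · rfl
theorem cd_lam_var_succ (u : Lam) (n : Nat) :
    cd (lam (app u (var (n+1)))) = lam (cd (app u (var (n+1)))) := by simp [cd]
theorem cd_lam_app (u x y : Lam) :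
    cd (lam (app u (app x y))) = lam (cd (app u (app x y))) := by simp [cd]
theorem cd_lam_lam2 (u x : Lam) :
    cd (lam (app u (lam x))) = lam (cd (app u (lam x))) := by simp [cd]

end Lam
namespace Lam

theorem cd_lift : ∀ (t : Lam) (c : Nat), cd (lift c t) = lift c (cd t)
  | var n, c => by simp only [cd_var, lift]; split_ifs <;> rw [cd_var]
  | app (var n) b, c => by
    simp only [lift, cd_app_var]
    split_ifs <;> rw [cd_app_var, cd_lift b c]
  | app (app a₁ a₂) b, c => by
    have h1 := cd_lift (app a₁ a₂) c
    simp only [lift] at h1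
    simp only [lift, cd_app_app, h1, cd_lift b c]
  | app (lam a) b, c => by
    simp only [lift, cd_beta, cd_lift a (c+1), cd_lift b c]
    rw [lift_subst_high (cd a) (cd b) 0 c (Nat.zero_le c)]
  | lam (var n), c => by
    simp only [cd_lam_var, lift]
    split_ifs <;> rw [cd_lam_var]
  | lam (lam a), c => by
    have h1 := cd_lift (lam a) (c+1)
    simp only [lift] at h1
    simp only [lift, cd_lam_lam, h1]
  | lam (app u (var 0)), c => by
    cases hu : unlift 0 u with
    | some u₀ =>
      have hl : lift 0 u₀ = u := lift_unlift hu
      rw [cd_lam_some hu]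
      simp only [lift]
      rw [if_pos (show (0:Nat) < c + 1 by omega)]
      rw [← hl, ← lift_lift u₀ 0 c (Nat.zero_le c)]
      rw [cd_lam_some (unlift_lift (lift c u₀) 0)]
      exact cd_lift u₀ c
    | none =>
      have hnone : unlift 0 (lift (c+1) u) = none := by
        rcases h2 : unlift 0 (lift (c+1) u) with _ | w
        · rfl
        · exfalso
          obtain ⟨q, hq, hw⟩ := lift_swap_inv u w c 0 (Nat.zero_le c) (lift_unlift h2).symm
          rw [hq, unlift_lift] at hu
          exact nomatch hu
      rw [cd_lam_none hu]
      have h1 := cd_lift (app u (var 0)) (c+1)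
      simp only [lift, if_pos (show (0:Nat) < c+1 by omega)] at h1
      simp only [lift, if_pos (show (0:Nat) < c+1 by omega), cd_lam_none hnone, h1]
  | lam (app u (var (n+1))), c => by
    have h1 := cd_lift (app u (var (n+1))) (c+1)
    simp only [lift] at h1
    rw [cd_lam_var_succ]
    simp only [lift]
    split_ifs with h
    · rw [if_pos h] at h1
      rw [cd_lam_var_succ, h1]
    · rw [if_neg h] at h1
      rw [show (n+1+1) = (n+1)+1 from rfl, cd_lam_var_succ, h1]
  | lam (app u (app x y)), c => by
    have h1 := cd_lift (app u (app x y)) (c+1)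
    simp only [lift] at h1
    simp only [lift, cd_lam_app, h1]
  | lam (app u (lam x)), c => by
    have h1 := cd_lift (app u (lam x)) (c+1)
    simp only [lift] at h1
    simp only [lift, cd_lam_lam2, h1]
termination_by t _ => size t
decreasing_by
  all_goals first
  | (simp only [size, size_unlift hu]; omega)
  | (simp only [size]; omega)

end Lam
namespace Lam

theorem size_pos (t : Lam) : 1 ≤ size t := by
  cases t <;> simp [size] <;> omega

theorem eta_cd (p b : Lam) :
    cd (app (lam (app (lift 0 p) (var 0))) b) = cd (app p b) := by
  rw [cd_beta]
  cases p with
  | var m =>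
    simp only [lift]
    rw [if_neg (by omega)]
    rw [cd_app_var, cd_var, cd_app_var]
    simp only [subst]
    simp
  | app p₁ p₂ =>
    simp only [lift]
    rw [cd_app_app]
    have h1 : cd (app (lift 0 p₁) (lift 0 p₂)) = lift 0 (cd (app p₁ p₂)) := by
      have := cd_lift (app p₁ p₂) 0
      simpa only [lift] using this
    rw [h1, cd_var, cd_app_app]
    simp only [subst]
    simp [subst_lift]
  | lam w =>
    simp only [lift]
    rw [cd_beta, cd_var, cd_lift w 1, subst_var_lift (cd w) 0, cd_beta]

theorem triangle : ∀ (n : Nat) (t u : Lam), size t ≤ n → Par t u → Par u (cd t) := by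
  intro n
  induction n with
  | zero => intro t u hs; exact absurd hs (by have := size_pos t; omega)
  | succ n ih =>
    intro t u hs hp
    cases t with
    | var m =>
      cases hp
      rw [cd_var]
      exact Par.var m
    | app a b =>
      simp only [size] at hs
      cases a with
      | var m =>
        cases hp with
        | app h1 h2 =>
          cases h1
          rw [cd_app_var]
          exact Par.app (Par.var m) (ih b _ (by omega) h2)
      | app a₁ a₂ =>
        cases hp with
        | app h1 h2 =>
          rw [cd_app_app]
          exact Par.app (ih (app a₁ a₂) _ (by simp only [size] at *; omega) h1)
            (ih b _ (by omega) h2)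
      | lam a₀ =>
        simp only [size] at hs
        cases hp with
        | beta h1 h2 =>
          rw [cd_beta]
          exact par_subst (ih a₀ _ (by omega) h1) _ _ 0 (ih b _ (by omega) h2)
        | app h1 h2 =>
          cases h1 with
          | lam h3 =>
            rw [cd_beta]
            exact Par.beta (ih a₀ _ (by omega) h3) (ih b _ (by omega) h2)
          | eta h3 =>
            rw [eta_cd]
            refine ih _ _ ?_ (Par.app h3 h2)
            simp only [size, size_lift] at hs ⊢
            omega
    | lam a =>
      simp only [size] at hs
      cases a with
      | var m =>
        cases hp with
        | lam h1 =>
          cases h1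
          rw [cd_lam_var]
          exact Par.lam (Par.var m)
      | lam a₀ =>
        cases hp with
        | lam h1 =>
          rw [cd_lam_lam]
          exact Par.lam (ih (lam a₀) _ (by simp only [size] at *; omega) h1)
      | app w v =>
        simp only [size] at hs
        cases v with
        | var k =>
          cases k with
          | zero =>
            cases hw : unlift 0 w with
            | some w₀ =>
              rw [cd_lam_some hw]
              cases hp with
              | lam h1 =>
                have hwl : lift 0 w₀ = w := lift_unlift hw
                cases h1 with
                | app h2 h3 =>
                  cases h3
                  rw [← hwl] at h2
                  obtain ⟨v₀, rfl, hv⟩ := par_lift_inv h2 w₀ 0 rfl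
                  refine Par.eta (ih w₀ v₀ ?_ hv)
                  have hsz := size_unlift hw
                  simp only [size] at hs
                  omega
                | beta h2 h3 =>
                  cases h3
                  obtain ⟨t₁, rfl, hcc⟩ := lift_eq_lam (lift_unlift hw)
                  rw [hcc] at h2
                  obtain ⟨c₀', rfl, hpar⟩ := par_lift_inv h2 t₁ 1 rfl
                  rw [subst_var_lift c₀' 0]
                  refine ih (lam t₁) (lam c₀') ?_ (Par.lam hpar)
                  simp only [size, size_lift, hcc] at hs ⊢
                  omega
              | eta h1 =>
                rw [unlift_lift] at hw
                obtain rfl := Option.some.inj hw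
                refine ih _ _ ?_ h1
                simp only [size, size_lift] at hs ⊢
                omega
            | none =>
              rw [cd_lam_none hw]
              cases hp with
              | lam h1 =>
                refine Par.lam (ih (app w (var 0)) _ ?_ h1)
                simp only [size] at hs ⊢
                omega
              | eta h1 =>
                rw [unlift_lift] at hw
                exact nomatch hw
          | succ k =>
            cases hp with
            | lam h1 =>
              rw [cd_lam_var_succ]
              refine Par.lam (ih (app w (var (k+1))) _ ?_ h1)
              simp only [size] at hs ⊢
              omega
        | app x y =>
          cases hp with
          | lam h1 =>
            rw [cd_lam_app]
            exact Par.lam (ih (app w (app x y)) _ (by simp only [size] at *; omega) h1)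
        | lam x =>
          cases hp with
          | lam h1 =>
            rw [cd_lam_lam2]
            exact Par.lam (ih (app w (lam x)) _ (by simp only [size] at *; omega) h1)

end Lam
open Lam

/-- The T combinator λx.λy. y x. -/
def T : Lam := lam (lam (app (var 0) (var 1)))

namespace Lam

theorem par_lam_inv {b x : Lam} (h : Par (lam b) x) :
    (∃ b', x = lam b' ∧ Par b b') ∨
    (∃ p, b = app (lift 0 p) (var 0) ∧ Par p x) := by
  generalize hy : lam b = y at h
  cases h with
  | var n => exact Lam.noConfusion hy
  | app h1 h2 => exact Lam.noConfusion hy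
  | lam h1 =>
    obtain rfl := Lam.lam.inj hy
    exact Or.inl ⟨_, rfl, h1⟩
  | beta h1 h2 => exact Lam.noConfusion hy
  | eta h1 =>
    obtain rfl := Lam.lam.inj hy
    exact Or.inr ⟨_, rfl, h1⟩

end Lam

/-- λy. y T -/
def U : Lam := lam (app (var 0) T)

theorem par_T {x : Lam} (h : Par T x) : x = T := by
  rcases par_lam_inv h with ⟨b', rfl, hb⟩ | ⟨p, hp, _⟩
  · rcases par_lam_inv hb with ⟨b'', rfl, hb2⟩ | ⟨p, hp, _⟩
    · cases hb2 with
      | app h3 h4 => cases h3; cases h4; rfl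
    · exact absurd (Lam.var.inj (Lam.app.inj hp).2) (by omega)
  · exact Lam.noConfusion hp

theorem par_T1 {x : Lam} (h : Par (lam (app (var 0) (var 1))) x) :
    x = lam (app (var 0) (var 1)) := by
  rcases par_lam_inv h with ⟨b', rfl, hb⟩ | ⟨p, hp, _⟩
  · cases hb with
    | app h3 h4 => cases h3; cases h4; rfl
  · exact absurd (Lam.var.inj (Lam.app.inj hp).2) (by omega)

theorem par_TT {x : Lam} (h : Par (app T T) x) : x = app T T ∨ x = U := by
  cases h with
  | app h1 h2 => exact Or.inl (by rw [par_T h1, par_T h2])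
  | beta h1 h2 =>
    right
    rw [par_T1 h1, par_T h2]
    rfl

theorem par_U {x : Lam} (h : Par U x) : x = U := by
  rcases par_lam_inv h with ⟨b', rfl, hb⟩ | ⟨p, hp, _⟩
  · cases hb with
    | app h2 h3 =>
      cases h2
      rw [par_T h3]
      rfl
  · exact absurd ((Lam.app.inj hp).2) (by simp [T])

open Relation

theorem rtg_T {d : Lam} (h : ReflTransGen Par T d) : d = T := by
  induction h with
  | refl => rfl
  | tail _ hstep ih => rw [ih] at hstep; exact par_T hstep

theorem rtg_TT {d : Lam} (h : ReflTransGen Par (app T T) d) :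
    d = app T T ∨ d = U := by
  induction h with
  | refl => exact Or.inl rfl
  | tail _ hstep ih =>
    rcases ih with rfl | rfl
    · exact par_TT hstep
    · exact Or.inr (par_U hstep)

theorem par_diamond : ∀ a b c : Lam, Par a b → Par a c →
    ∃ d, ReflGen Par b d ∧ ReflTransGen Par c d := by
  intro a b c h1 h2
  exact ⟨cd a, ReflGen.single (triangle (size a) a b le_rfl h1),
    ReflTransGen.single (triangle (size a) a c le_rfl h2)⟩

/-- T_(3) = T_(2) (T T T is βη-equivalent to T T), and T_(2) is not βη-equivalent to T. -/
theorem stmt8 : BetaEtaEq (flat T 2) (flat T 1) ∧ ¬ BetaEtaEq (flat T 1) T := by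
  constructor
  · have h1 : Step (app T T) U := by
      have h := Step.beta (lam (app (var 0) (var 1))) T
      have he : subst 0 T (lam (app (var 0) (var 1))) = U := by decide
      rwa [he] at h
    have h2 : Step (app U T) (app T T) := by
      have h := Step.beta (app (var 0) T) T
      have he : subst 0 T (app (var 0) T) = app T T := by decide
      rwa [he] at h
    exact EqvGen.trans _ _ _
      (EqvGen.rel _ _ (Step.appL T h1))
      (EqvGen.rel _ _ h2)
  · intro h
    have hpar : EqvGen Par (app T T) T :=
      EqvGen.mono (fun a b hs => step_par hs) _ _ h
    have hjoin : Join (ReflTransGen Par) (app T T) T := by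
      have hequiv := equivalence_join_reflTransGen par_diamond
      refine (Equivalence.eqvGen_iff hequiv).mp ?_
      exact EqvGen.mono (fun a b hab => ⟨b, ReflTransGen.single hab, ReflTransGen.refl⟩) _ _ hpar
    obtain ⟨d, hd1, hd2⟩ := hjoin
    obtain rfl := rtg_T hd2
    rcases rtg_TT hd1 with hc | hc <;> exact absurd hc (by decide)
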